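/- Let K be a semiring and (Σ,M) an OP alphabet. Every OPL step function S:(Σ,M)^+→K is strictly regular, i.e., recognized by a restricted weighted OPA over (Σ,M) and K. -/

import Mathlib

namespace WOP

/-- Precedence relations: yields precedence, equal in precedence, takes precedence. -/
inductive PrecRel where
  | lt | eq | gt
deriving DecidableEq

/-- An operator precedence matrix on `Σ ∪ {#}`, where `none` encodes `#`.
It assigns at most one precedence relation to each ordered pair, with
`# ⋖ a` and `a ⋗ #` for every letter `a`. -/
structure OPM (A : Type) where
  rel : Option A → Option A → Option PrecRel
  hash_lt : ∀ a : A, rel none (some a) = some .lt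
  hash_gt : ∀ a : A, rel (some a) none = some .gt

variable {A B K : Type}

/-- The letter of `#w#` at position `i` (positions `0` and `> |w|` carry `#`, i.e. `none`). -/
def letterAt (w : List A) (i : ℕ) : Option A :=
  if i = 0 then none else w[i - 1]?

section ChainRel

variable (M : OPM A) (L : ℕ → Option A)

mutual
  /-- `ChainMid M L k j`: there are `k = k_s < ... < k_m = j` with
  `L k_s ≐ L k_{s+1} ≐ ... ≐ L k_{m-1} ⋗ L k_m` and the gap condition between
  consecutive elements. -/
  inductive ChainMid : ℕ → ℕ → Prop where
    | last {k j : ℕ} : M.rel (L k) (L j) = some .gt → ChainGap k j → ChainMid k j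
    | step {k k' j : ℕ} : M.rel (L k) (L k') = some .eq → ChainGap k k' →
        ChainMid k' j → ChainMid k j

  /-- The gap condition between consecutive elements of a chain:
  adjacent positions or a chain. -/
  inductive ChainGap : ℕ → ℕ → Prop where
    | adj (k : ℕ) : ChainGap k (k + 1)
    | chain {k k' : ℕ} : Chain k k' → ChainGap k k'

  /-- The chain relation `i ⤳ j`: there are positions `i = k_1 < ... < k_m = j` with
  `L k_1 ⋖ L k_2 ≐ ... ≐ L k_{m-1} ⋗ L k_m` such that consecutive `k`'s are adjacent
  or themselves related by `⤳`. -/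
  inductive Chain : ℕ → ℕ → Prop where
    | mk {i k j : ℕ} : M.rel (L i) (L k) = some .lt → ChainGap i k → ChainMid k j →
        Chain i j
end

end ChainRel

/-- `(Σ,M)^+`: the set of nonempty words compatible with `M`, i.e. `0 ⤳ |w|+1` in `#w#`. -/
def OPWords (M : OPM A) : Set (List A) :=
  {w | w ≠ [] ∧ Chain M (letterAt w) 0 (w.length + 1)}

/-- An (unweighted) operator precedence automaton over the alphabet `A`. -/
structure OPA (A : Type) where
  Q : Type
  fin : Fintype Q
  I : Set Q
  F : Set Q
  δpush : Set (Q × A × Q)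
  δshift : Set (Q × A × Q)
  δpop : Set (Q × Q × Q)

/-- A weighted operator precedence automaton over the alphabet `A` and weights in `K`. -/
structure WOPA (A K : Type) extends OPA A where
  wtpush : Q × A × Q → K
  wtshift : Q × A × Q → K
  wtpop : Q × Q × Q → K

/-- A configuration: a stack of (symbol, state) pairs, a current state,
and the remaining input. -/
structure Config (A Q : Type) where
  stack : List (A × Q)
  state : Q
  input : List A

/-- The moves (transitions) an OPA may take. -/
inductive Move (A Q : Type) where
  | push (q : Q) (b : A) (r : Q)
  | shift (q : Q) (b : A) (r : Q)
  | pop (q p r : Q)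

/-- The topmost stack symbol (`none` = `#` for the empty stack). -/
def topSym {Q : Type} (st : List (A × Q)) : Option A := st.head?.map Prod.fst

/-- One step of an OPA on an OP alphabet `(A, M)`. -/
inductive Exec (M : OPM A) (T : OPA A) : Config A T.Q → Move A T.Q → Config A T.Q → Prop where
  | push {st : List (A × T.Q)} {q r : T.Q} {b : A} {x : List A} :
      M.rel (topSym st) (some b) = some .lt → (q, b, r) ∈ T.δpush →
      Exec M T ⟨st, q, b :: x⟩ (.push q b r) ⟨(b, q) :: st, r, x⟩
  | shift {st : List (A × T.Q)} {p q r : T.Q} {a b : A} {x : List A} :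
      M.rel (some a) (some b) = some .eq → (q, b, r) ∈ T.δshift →
      Exec M T ⟨(a, p) :: st, q, b :: x⟩ (.shift q b r) ⟨(b, p) :: st, r, x⟩
  | pop {st : List (A × T.Q)} {p q r : T.Q} {a : A} {x : List A} :
      M.rel (some a) x.head? = some .gt → (q, p, r) ∈ T.δpop →
      Exec M T ⟨(a, p) :: st, q, x⟩ (.pop q p r) ⟨st, r, x⟩

/-- Execution of a sequence of moves. -/
inductive ExecList (M : OPM A) (T : OPA A) :
    Config A T.Q → List (Move A T.Q) → Config A T.Q → Prop where
  | nil (c : Config A T.Q) : ExecList M T c [] c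
  | cons {c c' c'' : Config A T.Q} {m : Move A T.Q} {ms : List (Move A T.Q)} :
      Exec M T c m c' → ExecList M T c' ms c'' → ExecList M T c (m :: ms) c''

/-- The weight of a move of a weighted OPA. -/
def moveWt [Semiring K] (W : WOPA A K) : Move A W.Q → K
  | .push q b r => W.wtpush (q, b, r)
  | .shift q b r => W.wtshift (q, b, r)
  | .pop q p r => W.wtpop (q, p, r)

/-- The accepting runs of an OPA on `w`: an initial state, a sequence of moves from the
initial configuration (empty stack, whole input) to a final configuration
(empty stack, input read), and the final state reached. -/
def AccRuns (M : OPM A) (T : OPA A) (w : List A) : Set (T.Q × List (Move A T.Q) × T.Q) :=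
  {ρ | ρ.1 ∈ T.I ∧ ρ.2.2 ∈ T.F ∧ ExecList M T ⟨[], ρ.1, w⟩ ρ.2.1 ⟨[], ρ.2.2, []⟩}

/-- The behavior `⟦W⟧(w)`: the sum over all accepting runs of `W` on `w` of the product
(in order) of the weights of the moves of the run. -/
noncomputable def behavior [Semiring K] (M : OPM A) (W : WOPA A K) (w : List A) : K :=
  ∑ᶠ ρ ∈ AccRuns M W.toOPA w, (ρ.2.1.map (moveWt W)).prod

/-- A weighted OPA is restricted (an rwOPA) if all pop weights are `1`. -/
def Restricted [Semiring K] (W : WOPA A K) : Prop := ∀ t ∈ W.δpop, W.wtpop t = 1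

/-- A series `S : (Σ,M)^+ → K` is regular if it is the behavior of some wOPA. -/
def Regular [Semiring K] (M : OPM A) (S : List A → K) : Prop :=
  ∃ W : WOPA A K, ∀ w ∈ OPWords M, S w = behavior M W w

/-- A series is strictly regular if it is the behavior of some restricted wOPA. -/
def StrictlyRegular [Semiring K] (M : OPM A) (S : List A → K) : Prop :=
  ∃ W : WOPA A K, Restricted W ∧ ∀ w ∈ OPWords M, S w = behavior M W w

/-- Unweighted acceptance. -/
def Accepts (M : OPM A) (T : OPA A) (w : List A) : Prop :=
  ∃ qI ms qF, qI ∈ T.I ∧ qF ∈ T.F ∧ ExecList M T ⟨[], qI, w⟩ ms ⟨[], qF, []⟩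

/-- A language `L ⊆ (Σ,M)^+` is an operator precedence language if it is the set of
compatible words accepted by some OPA. -/
def IsOPL (M : OPM A) (L : Set (List A)) : Prop :=
  ∃ T : OPA A, L = {w | w ∈ OPWords M ∧ Accepts M T w}

/-- The intersection `S ∩ L` of a series with a language. -/
noncomputable def interSeries [Semiring K] (S : List A → K) (L : Set (List A))
    (w : List A) : K :=
  open Classical in if w ∈ L then S w else 0

/-- `h : Σ → Γ` is OPM-preserving: `a ⊙ b` iff `h(a) ⊙ h(b)` for every relation `⊙`. -/
def OPMPreserving (M : OPM A) (M' : OPM B) (h : A → B) : Prop :=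
  ∀ a b : A, M.rel (some a) (some b) = M'.rel (some (h a)) (some (h b))

/-- The image series `h(S)(v) = ∑_{w ∈ (Σ,M)^+, h(w) = v} S(w)`. -/
noncomputable def mapSeries [Semiring K] (M : OPM A) (h : A → B) (S : List A → K)
    (v : List B) : K :=
  ∑ᶠ w ∈ {w | w ∈ OPWords M ∧ w.map h = v}, S w

/-- The pullback OPM `h⁻¹(M)` along `h : Σ' → Σ`. -/
def pullOPM (M : OPM A) (h : B → A) : OPM B where
  rel o₁ o₂ := M.rel (o₁.map h) (o₂.map h)
  hash_lt b := M.hash_lt (h b)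
  hash_gt b := M.hash_gt (h b)

/-- The Nivat class `N(Σ,M,K)`: series obtained from a one-state restricted wOPA over a
pulled-back OP alphabet, intersected with an OPL, followed by the projection. -/
def NivatClass [Semiring K] (M : OPM A) (S : List A → K) : Prop :=
  ∃ (B : Type) (_ : Fintype B) (h : B → A) (W : WOPA B K) (L : Set (List B)),
    Restricted W ∧ (∃ q₀ : W.Q, ∀ q : W.Q, q = q₀) ∧ IsOPL (pullOPM M h) L ∧
    ∀ v ∈ OPWords M,
      S v = mapSeries (pullOPM M h) h (interSeries (behavior (pullOPM M h) W) L) v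

/-- An OPL step function: a finite sum `∑ kᵢ · 1_{Lᵢ}` with the `Lᵢ` OPLs forming a
partition of `(Σ,M)^+`. -/
def IsOPLStep [Semiring K] (M : OPM A) (S : List A → K) : Prop :=
  ∃ (n : ℕ) (k : Fin n → K) (L : Fin n → Set (List A)),
    (∀ i, IsOPL M (L i)) ∧ (∀ i j, i ≠ j → Disjoint (L i) (L j)) ∧
    (⋃ i, L i) = OPWords M ∧ ∀ i, ∀ w ∈ L i, S w = k i



section StepProof

variable {A K : Type}

/-- The kind of a move, forgetting the states. -/
inductive MK (A : Type) where
  | push (b : A)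
  | shift (b : A)
  | pop

/-- The kind of a move. -/
def mkOf {Q : Type} : Move A Q → MK A
  | .push _ b _ => .push b
  | .shift _ b _ => .shift b
  | .pop _ _ _ => .pop

/-! ### Generic inversion lemmas for `Exec`. -/

theorem exec_push_inv {T' : OPA A} {M : OPM A} {c c' : Config A T'.Q} {m : Move A T'.Q}
    {b : A} (h : Exec M T' c m c') (hk : mkOf m = .push b) :
    ∃ r x, c.input = b :: x ∧ M.rel (topSym c.stack) (some b) = some .lt ∧
      (c.state, b, r) ∈ T'.δpush ∧ m = .push c.state b r ∧
      c' = ⟨(b, c.state) :: c.stack, r, x⟩ := by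
  cases h with
  | @push st q r b' x hrel hδ =>
    have hb : b' = b := by simpa [mkOf] using hk
    subst hb
    exact ⟨r, x, rfl, hrel, hδ, rfl, rfl⟩
  | shift hrel hδ => simp [mkOf] at hk
  | pop hrel hδ => simp [mkOf] at hk

theorem exec_shift_inv {T' : OPA A} {M : OPM A} {c c' : Config A T'.Q} {m : Move A T'.Q}
    {b : A} (h : Exec M T' c m c') (hk : mkOf m = .shift b) :
    ∃ a p st r x, c = ⟨(a, p) :: st, c.state, b :: x⟩ ∧
      M.rel (some a) (some b) = some .eq ∧
      (c.state, b, r) ∈ T'.δshift ∧ m = .shift c.state b r ∧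
      c' = ⟨(b, p) :: st, r, x⟩ := by
  cases h with
  | @shift st p q r a b' x hrel hδ =>
    have hb : b' = b := by simpa [mkOf] using hk
    subst hb
    exact ⟨a, p, st, r, x, rfl, hrel, hδ, rfl, rfl⟩
  | push hrel hδ => simp [mkOf] at hk
  | pop hrel hδ => simp [mkOf] at hk

theorem exec_pop_inv {T' : OPA A} {M : OPM A} {c c' : Config A T'.Q} {m : Move A T'.Q}
    (h : Exec M T' c m c') (hk : mkOf m = .pop) :
    ∃ a p st r, c = ⟨(a, p) :: st, c.state, c.input⟩ ∧
      M.rel (some a) c.input.head? = some .gt ∧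
      (c.state, p, r) ∈ T'.δpop ∧ m = .pop c.state p r ∧
      c' = ⟨st, r, c.input⟩ := by
  cases h with
  | @pop st p q r a x hrel hδ =>
    exact ⟨a, p, st, r, rfl, hrel, hδ, rfl, rfl⟩
  | push hrel hδ => simp [mkOf] at hk
  | shift hrel hδ => simp [mkOf] at hk

theorem not_exec_nil {T' : OPA A} {M : OPM A} {q : T'.Q} {m : Move A T'.Q}
    {c' : Config A T'.Q} (h : Exec M T' ⟨[], q, []⟩ m c') : False := by
  cases h

theorem topSym_congr {Q Q' : Type} {st : List (A × Q)} {st' : List (A × Q')}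
    (h : st.map Prod.fst = st'.map Prod.fst) : topSym st = topSym st' := by
  simp only [topSym, ← List.head?_map, h]

/-- Two executions from configurations with the same stack symbols and inputs
perform moves of the same kind and stay symbol-synchronized. -/
theorem exec_shape {T₁ T₂ : OPA A} {M : OPM A} {c₁ c₁' : Config A T₁.Q}
    {m₁ : Move A T₁.Q} {c₂ c₂' : Config A T₂.Q} {m₂ : Move A T₂.Q}
    (h₁ : Exec M T₁ c₁ m₁ c₁') (h₂ : Exec M T₂ c₂ m₂ c₂')
    (hst : c₁.stack.map Prod.fst = c₂.stack.map Prod.fst)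
    (hin : c₁.input = c₂.input) :
    mkOf m₁ = mkOf m₂ ∧ c₁'.stack.map Prod.fst = c₂'.stack.map Prod.fst ∧
      c₁'.input = c₂'.input := by
  cases h₁ with
  | @push st₁ q₁ r₁ b₁ x₁ hrel₁ hδ₁ =>
    cases h₂ with
    | @push st₂ q₂ r₂ b₂ x₂ hrel₂ hδ₂ =>
      replace hin : b₁ :: x₁ = b₂ :: x₂ := hin
      injection hin with hb hx
      subst hb; subst hx
      replace hst : st₁.map Prod.fst = st₂.map Prod.fst := hst
      exact ⟨rfl, by simpa using hst, rfl⟩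
    | @shift st₂ p₂ q₂ r₂ a₂ b₂ x₂ hrel₂ hδ₂ =>
      exfalso
      replace hin : b₁ :: x₁ = b₂ :: x₂ := hin
      injection hin with hb hx
      subst hb
      have htop : topSym st₁ = some a₂ := topSym_congr (st' := (a₂, p₂) :: st₂) hst
      rw [htop] at hrel₁
      rw [hrel₁] at hrel₂
      simp at hrel₂
    | @pop st₂ p₂ q₂ r₂ a₂ x₂ hrel₂ hδ₂ =>
      exfalso
      replace hin : b₁ :: x₁ = x₂ := hin
      have htop : topSym st₁ = some a₂ := topSym_congr (st' := (a₂, p₂) :: st₂) hst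
      rw [htop] at hrel₁
      rw [← hin] at hrel₂
      simp only [List.head?_cons] at hrel₂
      rw [hrel₁] at hrel₂
      simp at hrel₂
  | @shift st₁ p₁ q₁ r₁ a₁ b₁ x₁ hrel₁ hδ₁ =>
    cases h₂ with
    | @push st₂ q₂ r₂ b₂ x₂ hrel₂ hδ₂ =>
      exfalso
      replace hin : b₁ :: x₁ = b₂ :: x₂ := hin
      injection hin with hb hx
      subst hb
      have htop : topSym st₂ = some a₁ := topSym_congr (st' := (a₁, p₁) :: st₁) hst.symm
      rw [htop] at hrel₂
      rw [hrel₁] at hrel₂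
      simp at hrel₂
    | @shift st₂ p₂ q₂ r₂ a₂ b₂ x₂ hrel₂ hδ₂ =>
      replace hin : b₁ :: x₁ = b₂ :: x₂ := hin
      injection hin with hb hx
      subst hb; subst hx
      replace hst : a₁ :: st₁.map Prod.fst = a₂ :: st₂.map Prod.fst := by simpa using hst
      injection hst with ha hst
      exact ⟨rfl, by simpa using hst, rfl⟩
    | @pop st₂ p₂ q₂ r₂ a₂ x₂ hrel₂ hδ₂ =>
      exfalso
      replace hst : a₁ :: st₁.map Prod.fst = a₂ :: st₂.map Prod.fst := by simpa using hst
      injection hst with ha hst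
      subst ha
      replace hin : b₁ :: x₁ = x₂ := hin
      rw [← hin] at hrel₂
      simp only [List.head?_cons] at hrel₂
      rw [hrel₁] at hrel₂
      simp at hrel₂
  | @pop st₁ p₁ q₁ r₁ a₁ x₁ hrel₁ hδ₁ =>
    cases h₂ with
    | @push st₂ q₂ r₂ b₂ x₂ hrel₂ hδ₂ =>
      exfalso
      replace hin : x₁ = b₂ :: x₂ := hin
      have htop : topSym st₂ = some a₁ := topSym_congr (st' := (a₁, p₁) :: st₁) hst.symm
      rw [htop] at hrel₂
      rw [hin] at hrel₁
      simp only [List.head?_cons] at hrel₁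
      rw [hrel₁] at hrel₂
      simp at hrel₂
    | @shift st₂ p₂ q₂ r₂ a₂ b₂ x₂ hrel₂ hδ₂ =>
      exfalso
      replace hst : a₁ :: st₁.map Prod.fst = a₂ :: st₂.map Prod.fst := by simpa using hst
      injection hst with ha hst
      subst ha
      replace hin : x₁ = b₂ :: x₂ := hin
      rw [hin] at hrel₁
      simp only [List.head?_cons] at hrel₁
      rw [hrel₁] at hrel₂
      simp at hrel₂
    | @pop st₂ p₂ q₂ r₂ a₂ x₂ hrel₂ hδ₂ =>
      replace hst : a₁ :: st₁.map Prod.fst = a₂ :: st₂.map Prod.fst := by simpa using hst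
      injection hst with ha hst
      exact ⟨rfl, hst, hin⟩

/-- Shape uniqueness: complete runs from symbol-equal configurations have the
same sequence of move kinds. -/
theorem execList_shape {T₁ T₂ : OPA A} {M : OPM A} {c₁ e₁ : Config A T₁.Q}
    {ms₁ : List (Move A T₁.Q)} (h₁ : ExecList M T₁ c₁ ms₁ e₁) :
    ∀ {c₂ e₂ : Config A T₂.Q} {ms₂ : List (Move A T₂.Q)}, ExecList M T₂ c₂ ms₂ e₂ →
      c₁.stack.map Prod.fst = c₂.stack.map Prod.fst → c₁.input = c₂.input →
      e₁.stack = [] → e₁.input = [] → e₂.stack = [] → e₂.input = [] →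
      ms₁.map mkOf = ms₂.map mkOf := by
  induction h₁ with
  | nil c =>
    intro c₂ e₂ ms₂ h₂ hst hin he₁s he₁i he₂s he₂i
    obtain ⟨s₂, q₂, i₂⟩ := c₂
    cases h₂ with
    | nil => rfl
    | cons hx hrest =>
      exfalso
      rw [he₁s] at hst
      rw [he₁i] at hin
      simp only at hst hin
      have hs : s₂ = [] := by simpa using hst.symm
      subst hs
      rw [← hin] at hx
      exact not_exec_nil hx
  | @cons c c' c'' m ms hx hrest ih =>
    intro c₂ e₂ ms₂ h₂ hst hin he₁s he₁i he₂s he₂i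
    cases h₂ with
    | nil =>
      exfalso
      obtain ⟨s₁, q₁, i₁⟩ := c
      rw [he₂s] at hst
      rw [he₂i] at hin
      simp only at hst hin
      have hs : s₁ = [] := by simpa using hst
      subst hs
      rw [hin] at hx
      exact not_exec_nil hx
    | cons hx₂ hrest₂ =>
      obtain ⟨hk, hst', hin'⟩ := exec_shape hx hx₂ hst hin
      simp only [List.map_cons, hk, ih hrest₂ hst' hin' he₁s he₁i he₂s he₂i]

variable {n : ℕ}

/-- State space of the determinized product automaton. -/
def SQ (T : Fin n → OPA A) : Type :=
  Bool × Fin n × ∀ i, Set ((T i).Q × (T i).Q)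

variable {T : Fin n → OPA A}

def pushP (T : Fin n → OPA A) (b : A) (P : ∀ i, Set ((T i).Q × (T i).Q)) (i : Fin n) :
    Set ((T i).Q × (T i).Q) :=
  {x | ∃ p, (p, x.1) ∈ P i ∧ (x.1, b, x.2) ∈ (T i).δpush}

def shiftP (T : Fin n → OPA A) (b : A) (P : ∀ i, Set ((T i).Q × (T i).Q)) (i : Fin n) :
    Set ((T i).Q × (T i).Q) :=
  {x | ∃ q, (x.1, q) ∈ P i ∧ (q, b, x.2) ∈ (T i).δshift}

def popP (T : Fin n → OPA A) (Pp P : ∀ i, Set ((T i).Q × (T i).Q)) (i : Fin n) :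
    Set ((T i).Q × (T i).Q) :=
  {x | ∃ p' q', (x.1, p') ∈ Pp i ∧ (p', q') ∈ P i ∧ (q', p', x.2) ∈ (T i).δpop}

def iniP (T : Fin n → OPA A) (i : Fin n) : Set ((T i).Q × (T i).Q) :=
  {x | x.1 = x.2 ∧ x.1 ∈ (T i).I}

def pushσ (b : A) (σ : SQ T) : SQ T := (false, σ.2.1, pushP T b σ.2.2)
def shiftσ (b : A) (σ : SQ T) : SQ T := (σ.1, σ.2.1, shiftP T b σ.2.2)
def popσ (σp σ : SQ T) : SQ T := (σ.1, σ.2.1, popP T σp.2.2 σ.2.2)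
def iniσ (T : Fin n → OPA A) (j : Fin n) : SQ T := (true, j, iniP T)

/-- The determinized product OPA. -/
@[reducible]
def detO (T : Fin n → OPA A) : OPA A where
  Q := SQ T
  fin := by
    classical
    letI : ∀ i, Fintype (T i).Q := fun i => (T i).fin
    unfold SQ
    infer_instance
  I := Set.range (iniσ T)
  F := {σ | ∃ x, x ∈ σ.2.2 σ.2.1 ∧ x.2 ∈ (T σ.2.1).F}
  δpush := {t | t.2.2 = pushσ t.2.1 t.1}
  δshift := {t | t.2.2 = shiftσ t.2.1 t.1}
  δpop := {t | t.2.2 = popσ t.2.1 t.1}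

theorem mem_detO_δpush {q r : SQ T} {b : A} :
    ((q, b, r) ∈ (detO T).δpush) ↔ r = pushσ b q := Iff.rfl

theorem mem_detO_δshift {q r : SQ T} {b : A} :
    ((q, b, r) ∈ (detO T).δshift) ↔ r = shiftσ b q := Iff.rfl

theorem mem_detO_δpop {q p r : SQ T} :
    ((q, p, r) ∈ (detO T).δpop) ↔ r = popσ p q := Iff.rfl

/-- The determinized automaton is deterministic. -/
theorem exec_det {M : OPM A} {d d₁ d₂ : Config A (detO T).Q} {m₁ m₂ : Move A (detO T).Q}
    (h₁ : Exec M (detO T) d m₁ d₁) (h₂ : Exec M (detO T) d m₂ d₂) :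
    m₁ = m₂ ∧ d₁ = d₂ := by
  obtain ⟨hk, -, -⟩ := exec_shape h₁ h₂ rfl rfl
  cases h₁ with
  | @push st σ r b x hrel hδ =>
    obtain ⟨r₂, x₂, hin, -, hδ₂, hm₂, hc₂⟩ := exec_push_inv h₂ hk.symm
    replace hin : b :: x = b :: x₂ := hin
    injection hin with hb hx
    subst hx
    rw [mem_detO_δpush] at hδ hδ₂
    subst hδ; subst hδ₂
    exact ⟨hm₂.symm, hc₂.symm⟩
  | @shift st σp σ r a₀ b x hrel hδ =>
    obtain ⟨a₂, p₂, st₂, r₂, x₂, hc, -, hδ₂, hm₂, hc₂⟩ := exec_shift_inv h₂ hk.symm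
    have hstk : (a₀, σp) :: st = (a₂, p₂) :: st₂ := congrArg Config.stack hc
    have hi : b :: x = b :: x₂ := congrArg Config.input hc
    injection hstk with h1 h2
    injection h1 with ha hp
    injection hi with hb hx
    subst ha; subst hp; subst h2; subst hx
    rw [mem_detO_δshift] at hδ hδ₂
    subst hδ; subst hδ₂
    exact ⟨hm₂.symm, hc₂.symm⟩
  | @pop st σp σ r a₀ x hrel hδ =>
    obtain ⟨a₂, p₂, st₂, r₂, hc, -, hδ₂, hm₂, hc₂⟩ := exec_pop_inv h₂ hk.symm
    have hstk : (a₀, σp) :: st = (a₂, p₂) :: st₂ := congrArg Config.stack hc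
    injection hstk with h1 h2
    injection h1 with ha hp
    subst ha; subst hp; subst h2
    rw [mem_detO_δpop] at hδ hδ₂
    subst hδ; subst hδ₂
    exact ⟨hm₂.symm, hc₂.symm⟩

/-- Complete runs of the determinized automaton are unique. -/
theorem runs_unique {M : OPM A} {d e₁ : Config A (detO T).Q} {ms₁ : List (Move A (detO T).Q)}
    (h₁ : ExecList M (detO T) d ms₁ e₁) :
    ∀ {e₂ : Config A (detO T).Q} {ms₂ : List (Move A (detO T).Q)}, ExecList M (detO T) d ms₂ e₂ →
      e₁.stack = [] → e₁.input = [] → e₂.stack = [] → e₂.input = [] →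
      ms₁ = ms₂ ∧ e₁ = e₂ := by
  induction h₁ with
  | nil c =>
    intro e₂ ms₂ h₂ he₁s he₁i he₂s he₂i
    cases h₂ with
    | nil => exact ⟨rfl, rfl⟩
    | cons hx hrest =>
      exfalso
      obtain ⟨s₁, q₁, i₁⟩ := c
      simp only at he₁s he₁i
      subst he₁s; subst he₁i
      exact not_exec_nil hx
  | @cons c c' c'' m ms hx hrest ih =>
    intro e₂ ms₂ h₂ he₁s he₁i he₂s he₂i
    cases h₂ with
    | nil =>
      exfalso
      obtain ⟨s₁, q₁, i₁⟩ := c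
      simp only at he₂s he₂i
      subst he₂s; subst he₂i
      exact not_exec_nil hx
    | cons hx₂ hrest₂ =>
      obtain ⟨hm, hc⟩ := exec_det hx hx₂
      subst hm
      subst hc
      obtain ⟨h1, h2⟩ := ih hrest₂ he₁s he₁i he₂s he₂i
      exact ⟨by rw [h1], h2⟩

/-- The simulation link between a component stack and a determinized stack,
anchored at `q₀` at the bottom; the first explicit argument of the relation is
the "anchor": the topmost stored component state (or `q₀` for the empty stack). -/
inductive Link (T : Fin n → OPA A) (i : Fin n) (q₀ : (T i).Q) :
    (T i).Q → List (A × (T i).Q) → List (A × SQ T) → Prop where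
  | nil : Link T i q₀ q₀ [] []
  | cons {a p : (T i).Q} {b : A} {σp : SQ T} {st : List (A × (T i).Q)}
      {st' : List (A × SQ T)} :
      Link T i q₀ a st st' → (a, p) ∈ σp.2.2 i →
      Link T i q₀ p ((b, p) :: st) ((b, σp) :: st')

theorem Link.symbols {i : Fin n} {q₀ a : (T i).Q} {st : List (A × (T i).Q)}
    {st' : List (A × SQ T)} (h : Link T i q₀ a st st') :
    st.map Prod.fst = st'.map Prod.fst := by
  induction h <;> simp [*]

theorem link_nil_inv {i : Fin n} {q₀ a : (T i).Q} {st : List (A × (T i).Q)}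
    (h : Link T i q₀ a st []) : a = q₀ ∧ st = [] := by
  cases h
  exact ⟨rfl, rfl⟩

theorem link_cons_inv {i : Fin n} {q₀ a : (T i).Q} {st : List (A × (T i).Q)}
    {b : A} {σp : SQ T} {st' : List (A × SQ T)}
    (h : Link T i q₀ a st ((b, σp) :: st')) :
    ∃ a' st₀, st = (b, a) :: st₀ ∧ Link T i q₀ a' st₀ st' ∧ (a', a) ∈ σp.2.2 i := by
  cases h with
  | cons h1 h2 => exact ⟨_, _, rfl, h1, h2⟩

/-- A component configuration is linked to a determinized configuration. -/
def LinkedC (T : Fin n → OPA A) (i : Fin n) (q₀ : (T i).Q)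
    (c : Config A (T i).Q) (d : Config A (SQ T)) : Prop :=
  c.input = d.input ∧ ∃ a, Link T i q₀ a c.stack d.stack ∧ (a, c.state) ∈ d.state.2.2 i

theorem step_iff {M : OPM A} {i : Fin n} {q₀ : (T i).Q}
    {d d' : Config A (detO T).Q} {m' : Move A (detO T).Q}
    (h : Exec M (detO T) d m' d') (c' : Config A (T i).Q) :
    LinkedC T i q₀ c' d' ↔
      ∃ c m, LinkedC T i q₀ c d ∧ Exec M (T i) c m c' ∧ mkOf m = mkOf m' := by
  obtain ⟨st'c, qc, inc⟩ := c'
  cases h with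
  | @push st σ r b x hrel hδ =>
    rw [mem_detO_δpush] at hδ
    subst hδ
    constructor
    · rintro ⟨hin, a, hlink, hpair⟩
      replace hin : inc = x := hin
      subst hin
      obtain ⟨a', st₀, hst, hlink0, hmem⟩ := link_cons_inv hlink
      subst hst
      obtain ⟨pp, hpp, hpush⟩ := hpair
      refine ⟨⟨st₀, a, b :: inc⟩, .push a b qc, ⟨rfl, a', hlink0, hmem⟩, ?_, rfl⟩
      have htop : topSym st₀ = topSym st := topSym_congr hlink0.symbols
      exact Exec.push (htop ▸ hrel) hpush
    · rintro ⟨c, m, ⟨hin, a, hlink, hpair⟩, hexec, hk⟩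
      obtain ⟨r₂, x₂, hcin, hrel', hpush, hm, hc'⟩ := exec_push_inv hexec hk
      rw [hin] at hcin
      replace hcin : b :: x = b :: x₂ := hcin
      injection hcin with hb hx
      subst hx
      have hs : st'c = (b, c.state) :: c.stack := congrArg Config.stack hc'
      have hq : qc = r₂ := congrArg Config.state hc'
      have hi : inc = x := congrArg Config.input hc'
      subst hs; subst hq; subst hi
      exact ⟨rfl, c.state, Link.cons hlink hpair, a, hpair, hpush⟩
  | @shift st σp σ r a₀ b x hrel hδ =>
    rw [mem_detO_δshift] at hδ
    subst hδ
    constructor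
    · rintro ⟨hin, a, hlink, hpair⟩
      replace hin : inc = x := hin
      subst hin
      obtain ⟨a', st₀, hst, hlink0, hmem⟩ := link_cons_inv hlink
      subst hst
      obtain ⟨q, hq, hshift⟩ := hpair
      exact ⟨⟨(a₀, a) :: st₀, q, b :: inc⟩, .shift q b qc,
        ⟨rfl, a, Link.cons hlink0 hmem, hq⟩, Exec.shift hrel hshift, rfl⟩
    · rintro ⟨c, m, ⟨hin, a, hlink, hpair⟩, hexec, hk⟩
      obtain ⟨a₂, p₂, st₂, r₂, x₂, hc, hrel', hshift, hm, hc'⟩ := exec_shift_inv hexec hk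
      obtain ⟨cs, cq, ci⟩ := c
      have hs : cs = (a₂, p₂) :: st₂ := congrArg Config.stack hc
      have hi : ci = b :: x₂ := congrArg Config.input hc
      simp only at hin hlink hpair
      subst hs
      rw [hin] at hi
      injection hi with hb hx
      subst hx
      have hs' : st'c = (b, p₂) :: st₂ := congrArg Config.stack hc'
      have hq' : qc = r₂ := congrArg Config.state hc'
      have hi' : inc = x := congrArg Config.input hc'
      subst hs'; subst hq'; subst hi'
      obtain ⟨a', st₀, hst, hlink0, hmem⟩ := link_cons_inv hlink
      injection hst with h1 h2
      injection h1 with ha hp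
      subst h2
      subst hp
      exact ⟨rfl, p₂, Link.cons hlink0 hmem, cq, hpair, hshift⟩
  | @pop st σp σ r a₀ x hrel hδ =>
    rw [mem_detO_δpop] at hδ
    subst hδ
    constructor
    · rintro ⟨hin, a, hlink, hpair⟩
      replace hin : inc = x := hin
      subst hin
      obtain ⟨p', q', hp', hq', hpop⟩ := hpair
      exact ⟨⟨(a₀, p') :: st'c, q', inc⟩, .pop q' p' qc,
        ⟨rfl, p', Link.cons hlink hp', hq'⟩, Exec.pop hrel hpop, rfl⟩
    · rintro ⟨c, m, ⟨hin, a, hlink, hpair⟩, hexec, hk⟩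
      obtain ⟨a₂, p₂, st₂, r₂, hc, hrel', hpop, hm, hc'⟩ := exec_pop_inv hexec hk
      obtain ⟨cs, cq, ci⟩ := c
      have hs : cs = (a₂, p₂) :: st₂ := congrArg Config.stack hc
      simp only at hin hlink hpair
      subst hs
      subst hin
      have hs' : st'c = st₂ := congrArg Config.stack hc'
      have hq' : qc = r₂ := congrArg Config.state hc'
      have hi' : inc = ci := congrArg Config.input hc'
      subst hs'; subst hq'; subst hi'
      obtain ⟨a', st₀, hst, hlink0, hmem⟩ := link_cons_inv hlink
      injection hst with h1 h2
      injection h1 with ha hp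
      subst h2
      subst hp
      exact ⟨rfl, a', hlink0, p₂, cq, hmem, hpair, hpop⟩

theorem runs_iff {M : OPM A} {i : Fin n} {q₀ : (T i).Q}
    {d d' : Config A (detO T).Q} {ms' : List (Move A (detO T).Q)}
    (h : ExecList M (detO T) d ms' d') :
    ∀ c' : Config A (T i).Q,
      LinkedC T i q₀ c' d' ↔
        ∃ c ms, LinkedC T i q₀ c d ∧ ExecList M (T i) c ms c' ∧
          ms.map mkOf = ms'.map mkOf := by
  induction h with
  | nil d =>
    intro c'
    constructor
    · intro hl
      exact ⟨c', [], hl, ExecList.nil c', rfl⟩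
    · rintro ⟨c, ms, hl, hrun, hk⟩
      simp only [List.map_nil, List.map_eq_nil_iff] at hk
      subst hk
      cases hrun
      exact hl
  | @cons d dm d' m' ms' hstep hrest ih =>
    intro c'
    rw [ih c']
    constructor
    · rintro ⟨c'', ms, hl'', hrun, hk⟩
      rw [step_iff hstep c''] at hl''
      obtain ⟨c, m, hl, hex, hkm⟩ := hl''
      exact ⟨c, m :: ms, hl, ExecList.cons hex hrun, by simp [hkm, hk]⟩
    · rintro ⟨c, ms, hl, hrun, hk⟩
      cases hrun with
      | nil => simp at hk
      | @cons _ c₁ _ m ms₀ hex hrun₀ =>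
        simp only [List.map_cons, List.cons.injEq] at hk
        refine ⟨c₁, ms₀, ?_, hrun₀, hk.2⟩
        rw [step_iff hstep c₁]
        exact ⟨c, m, hl, hex, hk.1⟩

end StepProof

section StepProof2

variable {A K : Type} {n : ℕ} {T : Fin n → OPA A}

/-- Totality: the determinized automaton can mimic any step of a component. -/
theorem sim_step {M : OPM A} {i : Fin n} {c c' : Config A (T i).Q} {m : Move A (T i).Q}
    (h : Exec M (T i) c m c') (d : Config A (SQ T))
    (hst : c.stack.map Prod.fst = d.stack.map Prod.fst) (hin : c.input = d.input) :
    ∃ m' d', Exec M (detO T) d m' d' ∧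
      c'.stack.map Prod.fst = d'.stack.map Prod.fst ∧ c'.input = d'.input := by
  obtain ⟨ds, σ, di⟩ := d
  cases h with
  | @push st q r b x hrel hδ =>
    replace hin : b :: x = di := hin
    subst hin
    replace hst : st.map Prod.fst = ds.map Prod.fst := hst
    refine ⟨.push σ b (pushσ b σ), ⟨(b, σ) :: ds, pushσ b σ, x⟩,
      Exec.push ?_ rfl, ?_, rfl⟩
    · rw [← topSym_congr hst]; exact hrel
    · simpa using hst
  | @shift st p q r a b x hrel hδ =>
    replace hin : b :: x = di := hin
    subst hin
    match ds, hst with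
    | (a₂, σp) :: ds₀, hst =>
      replace hst : a :: st.map Prod.fst = a₂ :: ds₀.map Prod.fst := hst
      injection hst with ha hst
      subst ha
      refine ⟨.shift σ b (shiftσ b σ), ⟨(b, σp) :: ds₀, shiftσ b σ, x⟩,
        Exec.shift hrel rfl, ?_, rfl⟩
      simpa using hst
  | @pop st p q r a x hrel hδ =>
    replace hin : x = di := hin
    subst hin
    match ds, hst with
    | (a₂, σp) :: ds₀, hst =>
      replace hst : a :: st.map Prod.fst = a₂ :: ds₀.map Prod.fst := hst
      injection hst with ha hst
      subst ha
      exact ⟨.pop σ σp (popσ σp σ), ⟨ds₀, popσ σp σ, x⟩, Exec.pop hrel rfl, hst, rfl⟩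

theorem sim_list {M : OPM A} {i : Fin n} {c c' : Config A (T i).Q}
    {ms : List (Move A (T i).Q)} (h : ExecList M (T i) c ms c') :
    ∀ d : Config A (SQ T),
      c.stack.map Prod.fst = d.stack.map Prod.fst → c.input = d.input →
      ∃ ms' d', ExecList M (detO T) d ms' d' ∧
        c'.stack.map Prod.fst = d'.stack.map Prod.fst ∧ c'.input = d'.input := by
  induction h with
  | nil c =>
    intro d h1 h2
    exact ⟨[], d, ExecList.nil (M := M) (T := detO T) d, h1, h2⟩
  | cons hx hrest ih =>
    intro d h1 h2
    obtain ⟨m', d₁, hex, h1', h2'⟩ := sim_step hx d h1 h2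
    obtain ⟨ms', d', hl, h1'', h2''⟩ := ih d₁ h1' h2'
    exact ⟨m' :: ms', d', ExecList.cons hex hl, h1'', h2''⟩

theorem exec_sndfst {M : OPM A} {d d' : Config A (detO T).Q} {m : Move A (detO T).Q}
    (h : Exec M (detO T) d m d') : d'.state.2.1 = d.state.2.1 := by
  cases h with
  | push hrel hδ => rw [mem_detO_δpush] at hδ; subst hδ; rfl
  | shift hrel hδ => rw [mem_detO_δshift] at hδ; subst hδ; rfl
  | pop hrel hδ => rw [mem_detO_δpop] at hδ; subst hδ; rfl

theorem execList_sndfst {M : OPM A} {d d' : Config A (detO T).Q} {ms : List (Move A (detO T).Q)}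
    (h : ExecList M (detO T) d ms d') : d'.state.2.1 = d.state.2.1 := by
  induction h with
  | nil => rfl
  | cons hx hrest ih => rw [ih, exec_sndfst hx]

theorem exec_false {M : OPM A} {d d' : Config A (detO T).Q} {m : Move A (detO T).Q}
    (h : Exec M (detO T) d m d') (hb : d.state.1 = false) : d'.state.1 = false := by
  cases h with
  | push hrel hδ => rw [mem_detO_δpush] at hδ; subst hδ; rfl
  | shift hrel hδ => rw [mem_detO_δshift] at hδ; subst hδ; exact hb
  | pop hrel hδ => rw [mem_detO_δpop] at hδ; subst hδ; exact hb

/-- The determinized weighted automaton. -/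
@[reducible]
def detW [Semiring K] (T : Fin n → OPA A) (k : Fin n → K) : WOPA A K :=
  { toOPA := detO T
    wtpush := fun t => if t.1.1 = true then k t.1.2.1 else 1
    wtshift := fun _ => 1
    wtpop := fun _ => 1 }

theorem wt_tail [Semiring K] {k : Fin n → K} {M : OPM A} {d e : Config A (detO T).Q}
    {ms : List (Move A (detO T).Q)} (h : ExecList M (detO T) d ms e)
    (hb : d.state.1 = false) : (ms.map (moveWt (detW T k))).prod = 1 := by
  induction h with
  | nil => simp
  | @cons c c' c'' m ms hx hrest ih =>
    have hb' : c'.state.1 = false := exec_false hx hb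
    have h1 : moveWt (detW T k) m = 1 := by
      cases hx with
      | @push st σ r b x hrel hδ =>
        replace hb : σ.1 = false := hb
        simp [moveWt, detW, hb]
      | shift hrel hδ => simp [moveWt, detW]
      | pop hrel hδ => simp [moveWt, detW]
    rw [List.map_cons, List.prod_cons, h1, one_mul, ih hb']

theorem wt_run [Semiring K] {k : Fin n → K} {M : OPM A} {j : Fin n} {w : List A}
    {ms : List (Move A (SQ T))} {σf : SQ T} (hw : w ≠ [])
    (h : ExecList M (detO T) ⟨[], iniσ T j, w⟩ ms ⟨[], σf, []⟩) :
    (ms.map (moveWt (detW T k))).prod = k j := by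
  cases h with
  | nil => exact absurd rfl hw
  | @cons _ c' _ m ms' hx hrest =>
    cases hx with
    | @push st σ r b x hrel hδ =>
      rw [mem_detO_δpush] at hδ
      subst hδ
      have h1 : moveWt (detW T k) (.push (iniσ T j) b (pushσ b (iniσ T j))) = k j := by
        simp [moveWt, detW, iniσ]
      have h2 : (ms'.map (moveWt (detW T k))).prod = 1 := wt_tail hrest rfl
      rw [List.map_cons, List.prod_cons, h1, h2, mul_one]

end StepProof2


/-- Every OPL step function is strictly regular. -/
theorem step_strictlyRegular {A K : Type} [Fintype A] [Semiring K] (M : OPM A)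
    (S : List A → K) (hS : IsOPLStep M S) : StrictlyRegular M S := by
  classical
  obtain ⟨n, k, L, hOPL, hdisj, hcover, hval⟩ := hS
  choose T hT using hOPL
  refine ⟨detW T k, fun t _ => rfl, ?_⟩
  intro w hw
  -- the unique index whose language contains `w`
  have hwU : w ∈ ⋃ i, L i := hcover.symm ▸ hw
  rw [Set.mem_iUnion] at hwU
  obtain ⟨i₀, hwi⟩ := hwU
  -- an accepting run of the component `i₀`
  have hacc : Accepts M (T i₀) w := ((hT i₀) ▸ hwi).2
  obtain ⟨q₀, ms₀, qf₀, hq₀I, hqfF, hrun₀⟩ := hacc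
  -- the canonical runs of the determinized automaton, one for each initial guess
  have hsim : ∀ j : Fin n, ∃ ms' σf,
      ExecList M (detO T) ⟨[], iniσ T j, w⟩ ms' ⟨[], σf, []⟩ := by
    intro j
    obtain ⟨ms', d', hl, h1, h2⟩ := sim_list hrun₀ ⟨[], iniσ T j, w⟩ rfl rfl
    obtain ⟨ds, σf, di⟩ := d'
    replace h1 : ([] : List ((T i₀).Q × (T i₀).Q × Unit)).map Prod.fst ≠ [] ∨
        ds.map Prod.fst = [] := Or.inr (by simpa using h1.symm)
    have hds : ds = [] := by
      rcases h1 with h1 | h1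
      · exact absurd rfl h1
      · simpa using h1
    have hdi : di = [] := by simpa using h2.symm
    subst hds; subst hdi
    exact ⟨ms', σf, hl⟩
  choose msj σfj hrunj using hsim
  have hidx : ∀ j, (σfj j).2.1 = j := fun j => execList_sndfst (hrunj j)
  -- acceptance of the canonical run characterizes membership in `L j`
  have hAccF : ∀ j, σfj j ∈ (detO T).F → Accepts M (T j) w := by
    intro j hF
    replace hF : ∃ x, x ∈ (σfj j).2.2 ((σfj j).2.1) ∧ x.2 ∈ (T ((σfj j).2.1)).F := hF
    rw [hidx j] at hF
    obtain ⟨x, hx, hxF⟩ := hF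
    obtain ⟨c, ms, ⟨hcin, a, hlink, hpairI⟩, hrunT, -⟩ :=
      (runs_iff (q₀ := x.1) (hrunj j) ⟨[], x.2, []⟩).mp ⟨rfl, x.1, Link.nil, hx⟩
    obtain ⟨cs, cq, ci⟩ := c
    replace hcin : ci = w := hcin
    subst hcin
    obtain ⟨ha, hcs⟩ := link_nil_inv hlink
    subst hcs
    subst ha
    obtain ⟨heq, hIm⟩ := hpairI
    replace heq : x.1 = cq := heq
    subst heq
    exact ⟨x.1, ms, x.2, hIm, hxF, hrunT⟩
  have hFAcc : ∀ j, w ∈ L j → σfj j ∈ (detO T).F := by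
    intro j hwj
    obtain ⟨p₀, msj', pf, hpI, hpF, hrunj'⟩ := ((hT j) ▸ hwj).2
    have hkinds : msj'.map mkOf = (msj j).map mkOf :=
      execList_shape hrunj' (hrunj j) rfl rfl rfl rfl rfl rfl
    have hlc : LinkedC T j p₀ ⟨[], pf, []⟩ ⟨[], σfj j, []⟩ :=
      (runs_iff (hrunj j) ⟨[], pf, []⟩).mpr
        ⟨⟨[], p₀, w⟩, msj', ⟨rfl, p₀, Link.nil, rfl, hpI⟩, hrunj', hkinds⟩
    obtain ⟨-, a, hlink, hpair⟩ := hlc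
    obtain ⟨ha, -⟩ := link_nil_inv hlink
    subst ha
    show ∃ x, x ∈ (σfj j).2.2 ((σfj j).2.1) ∧ x.2 ∈ (T ((σfj j).2.1)).F
    rw [hidx j]
    exact ⟨(a, pf), hpair, hpF⟩
  -- the accepting runs of the determinized automaton form a singleton
  have hAcc : AccRuns M (detO T) w = {(iniσ T i₀, msj i₀, σfj i₀)} := by
    apply Set.eq_singleton_iff_unique_mem.mpr
    constructor
    · exact ⟨⟨i₀, rfl⟩, hFAcc i₀ hwi, hrunj i₀⟩
    · rintro ⟨qI, ms, qF⟩ ⟨hI, hF, hrun⟩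
      obtain ⟨j, hj⟩ := hI
      simp only at hj
      subst hj
      obtain ⟨hms, hcfg⟩ := runs_unique (hrunj j) hrun rfl rfl rfl rfl
      have hqF : σfj j = qF := congrArg Config.state hcfg
      subst hqF
      have hwj : w ∈ L j := by
        rw [hT j]
        exact ⟨hw, hAccF j hF⟩
      have hj0 : j = i₀ := by
        by_contra hne
        exact (Set.disjoint_left.mp (hdisj j i₀ hne) hwj) hwi
      subst hj0
      rw [hms]
  -- compute the behavior
  have hbeh : behavior M (detW T k) w = k i₀ := by
    rw [behavior]
    have : AccRuns M (detW T k).toOPA w = {(iniσ T i₀, msj i₀, σfj i₀)} := hAcc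
    rw [this, finsum_mem_singleton]
    exact wt_run hw.1 (hrunj i₀)
  rw [hbeh]
  exact hval i₀ w hwi
end WOP
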